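/- Let F be a field and let A ∈ M_n(F) be invertible. If A = S + T where S, T ∈ M_n(F) are square-zero, then n is even, say n = 2k, the ranks and nullities satisfy rank(S) = rank(T) = nullity(S) = nullity(T) = k, and there exists an invertible matrix T₁ ∈ M_k(F) such that A is similar to the 2×2 block matrix with blocks [[0, T₁], [I_k, 0]] (zero blocks on the diagonal, T₁ in the upper-right block and the identity I_k in the lower-left block). -/

import Mathlib

open Matrix Module Submodule

section Aux

variable {F : Type*} [Field F] {n : ℕ}

/-- toMatrix in a reindexed basis is the reindexed matrix. -/
lemma toMatrix_basis_reindex {ι ι' : Type*} [Fintype ι] [DecidableEq ι]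
    [Fintype ι'] [DecidableEq ι'] {M : Type*} [AddCommGroup M] [Module F M]
    (b : Basis ι F M) (e : ι ≃ ι') (f : M →ₗ[F] M) :
    LinearMap.toMatrix (b.reindex e) (b.reindex e) f =
      Matrix.reindex e e (LinearMap.toMatrix b b f) := by
  ext i j
  simp [LinearMap.toMatrix_apply, Basis.repr_reindex, Basis.reindex_apply,
    Matrix.reindex_apply, Matrix.submatrix_apply, Finsupp.mapDomain_equiv_apply]

end Aux

set_option maxHeartbeats 1600000 in
/-- Let `F` be a field and `A ∈ M_n(F)` invertible with `A = S + T` where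
`S, T` are square-zero. Then `n = 2k` is even, `rank S = rank T = nullity S = nullity T = k`,
and `A` is similar to the block matrix `[[0, T₁], [I_k, 0]]` for some invertible
`T₁ ∈ M_k(F)`. -/
theorem stmt13 {n : ℕ} {F : Type*} [Field F]
    (A S T : Matrix (Fin n) (Fin n) F)
    (hA : IsUnit A) (hS : S * S = 0) (hT : T * T = 0) (hsum : A = S + T) :
    ∃ k : ℕ, n = 2 * k ∧
      S.rank = k ∧ T.rank = k ∧
      Module.finrank F (LinearMap.ker S.mulVecLin) = k ∧
      Module.finrank F (LinearMap.ker T.mulVecLin) = k ∧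
      ∃ (hk : k + k = n) (T₁ : Matrix (Fin k) (Fin k) F)
        (P : (Matrix (Fin n) (Fin n) F)ˣ),
        IsUnit T₁ ∧
        (P⁻¹ : (Matrix (Fin n) (Fin n) F)ˣ) * A * (P : Matrix (Fin n) (Fin n) F) =
          Matrix.reindex (finSumFinEquiv.trans (finCongr hk))
            (finSumFinEquiv.trans (finCongr hk))
            (Matrix.fromBlocks (0 : Matrix (Fin k) (Fin k) F) T₁ (1 : Matrix (Fin k) (Fin k) F) 0) := by
  classical
  have hAinv := hA.invertible
  set f : (Fin n → F) →ₗ[F] (Fin n → F) := A.mulVecLin with hfdef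
  set s : (Fin n → F) →ₗ[F] (Fin n → F) := S.mulVecLin with hsdef
  set t : (Fin n → F) →ₗ[F] (Fin n → F) := T.mulVecLin with htdef
  have hfst : ∀ x, f x = s x + t x := by
    intro x
    rw [hfdef, hsum, Matrix.mulVecLin_add]; rfl
  have hss : ∀ x, s (s x) = 0 := by
    intro x
    have : (S * S).mulVecLin x = 0 := by rw [hS, Matrix.mulVecLin_zero]; rfl
    rwa [Matrix.mulVecLin_mul] at this
  have htt : ∀ x, t (t x) = 0 := by
    intro x
    have : (T * T).mulVecLin x = 0 := by rw [hT, Matrix.mulVecLin_zero]; rfl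
    rwa [Matrix.mulVecLin_mul] at this
  have hfinj : Function.Injective f := by
    intro x y hxy
    have h1 : ((⅟A) * A).mulVecLin x = ((⅟A) * A).mulVecLin y := by
      rw [Matrix.mulVecLin_mul]
      exact congrArg (⅟A).mulVecLin hxy
    rwa [invOf_mul_self, Matrix.mulVecLin_one] at h1
  -- kernels are disjoint
  have hdisj : LinearMap.ker s ⊓ LinearMap.ker t = ⊥ := by
    rw [Submodule.eq_bot_iff]
    rintro x ⟨hx1, hx2⟩
    have hx1' : s x = 0 := hx1
    have hx2' : t x = 0 := hx2
    have : f x = f 0 := by rw [map_zero, hfst, hx1', hx2', add_zero]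
    exact hfinj this
  -- range ≤ ker
  have hrks : LinearMap.range s ≤ LinearMap.ker s := by
    rintro _ ⟨x, rfl⟩; exact hss x
  have hrkt : LinearMap.range t ≤ LinearMap.ker t := by
    rintro _ ⟨x, rfl⟩; exact htt x
  -- dimension count
  have hfr : Module.finrank F (Fin n → F) = n := by simp
  have h1 : S.rank + Module.finrank F (LinearMap.ker s) = n := by
    have h := LinearMap.finrank_range_add_finrank_ker s
    rw [hfr] at h
    exact h
  have h2 : T.rank + Module.finrank F (LinearMap.ker t) = n := by
    have h := LinearMap.finrank_range_add_finrank_ker t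
    rw [hfr] at h
    exact h
  have h3 : S.rank ≤ Module.finrank F (LinearMap.ker s) := Submodule.finrank_mono hrks
  have h4 : T.rank ≤ Module.finrank F (LinearMap.ker t) := Submodule.finrank_mono hrkt
  have hsum5 := Submodule.finrank_sup_add_finrank_inf_eq (LinearMap.ker s) (LinearMap.ker t)
  rw [hdisj, finrank_bot, add_zero] at hsum5
  have hle : Module.finrank F ↥(LinearMap.ker s ⊔ LinearMap.ker t) ≤ n := by
    have := Submodule.finrank_le (LinearMap.ker s ⊔ LinearMap.ker t)
    rwa [hfr] at this
  have h5 : Module.finrank F (LinearMap.ker s) + Module.finrank F (LinearMap.ker t) ≤ n := by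
    omega
  set k := Module.finrank F (LinearMap.ker s) with hkdef
  have hnk : n = 2 * k := by omega
  have hkt : Module.finrank F (LinearMap.ker t) = k := by omega
  have hrS : S.rank = k := by omega
  have hrT : T.rank = k := by omega
  have hk2 : k + k = n := by omega
  -- the kernels are complementary
  have hsup : LinearMap.ker s ⊔ LinearMap.ker t = ⊤ := by
    apply Submodule.eq_top_of_finrank_eq
    rw [hfr]
    omega
  have hcompl : IsCompl (LinearMap.ker s) (LinearMap.ker t) :=
    ⟨disjoint_iff.mpr hdisj, codisjoint_iff.mpr hsup⟩
  -- f maps ker s into ker t and vice versa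
  have hST : ∀ x ∈ LinearMap.ker s, f x ∈ LinearMap.ker t := by
    intro x hx
    have hx' : s x = 0 := hx
    have : f x = t x := by rw [hfst, hx', zero_add]
    show t (f x) = 0
    rw [this]; exact htt x
  have hTS : ∀ x ∈ LinearMap.ker t, f x ∈ LinearMap.ker s := by
    intro x hx
    have hx' : t x = 0 := hx
    have : f x = s x := by rw [hfst, hx', add_zero]
    show s (f x) = 0
    rw [this]; exact hss x
  set g : LinearMap.ker s →ₗ[F] LinearMap.ker t := f.restrict hST with hgdef
  set q : LinearMap.ker t →ₗ[F] LinearMap.ker s := f.restrict hTS with hqdef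
  have hginj : Function.Injective g := by
    intro x y hxy
    apply Subtype.ext
    apply hfinj
    exact congrArg Subtype.val hxy
  have hqinj : Function.Injective q := by
    intro x y hxy
    apply Subtype.ext
    apply hfinj
    exact congrArg Subtype.val hxy
  set gE : (LinearMap.ker s) ≃ₗ[F] (LinearMap.ker t) :=
    g.linearEquivOfInjective hginj (by rw [← hkdef, hkt]) with hgEdef
  set qE : (LinearMap.ker t) ≃ₗ[F] (LinearMap.ker s) :=
    q.linearEquivOfInjective hqinj (by rw [← hkdef, hkt]) with hqEdef
  -- bases
  set bS : Basis (Fin k) F (LinearMap.ker s) := Module.finBasisOfFinrankEq F _ hkdef.symm with hbSdef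
  set bT : Basis (Fin k) F (LinearMap.ker t) := bS.map gE with hbTdef
  set e : ((LinearMap.ker s) × (LinearMap.ker t)) ≃ₗ[F] (Fin n → F) :=
    Submodule.prodEquivOfIsCompl _ _ hcompl with hedef
  have he : ∀ xy : (LinearMap.ker s) × (LinearMap.ker t), e xy = ↑xy.1 + ↑xy.2 := by
    intro xy
    have : (e : _ →ₗ[F] (Fin n → F)) xy =
        ((LinearMap.ker s).subtype.coprod (LinearMap.ker t).subtype) xy := by
      rw [Submodule.coe_prodEquivOfIsCompl]
    simpa using this
  set b0 : Basis (Fin k ⊕ Fin k) F (Fin n → F) := (bS.prod bT).map e with hb0def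
  have hb0l : ∀ i, b0 (Sum.inl i) = ↑(bS i) := by
    intro i
    rw [hb0def, Basis.map_apply, Basis.prod_apply, he]
    simp
  have hb0r : ∀ i, b0 (Sum.inr i) = ↑(bT i) := by
    intro i
    rw [hb0def, Basis.map_apply, Basis.prod_apply, he]
    simp
  set T₁ : Matrix (Fin k) (Fin k) F := LinearMap.toMatrix bT bS q with hT1def
  have hT1unit : IsUnit T₁ := by
    refine (Matrix.isUnit_iff_isUnit_det _).mpr (Matrix.isUnit_det_of_right_inverse (B := LinearMap.toMatrix bS bT (qE.symm : _ →ₗ[F] _)) ?_)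
    rw [hT1def, ← LinearMap.toMatrix_comp bS bT bS]
    have : q ∘ₗ (qE.symm : (LinearMap.ker s) →ₗ[F] (LinearMap.ker t)) = LinearMap.id := by
      apply LinearMap.ext
      intro x
      show q (qE.symm x) = x
      have h : q (qE.symm x) = qE (qE.symm x) := rfl
      rw [h, qE.apply_symm_apply]
    rw [this, LinearMap.toMatrix_id]
  -- the key computation
  have hkey : Matrix.toLin b0 b0 (Matrix.fromBlocks 0 T₁ 1 0) = f := by
    apply b0.ext
    intro j
    rw [Matrix.toLin_self]
    cases j with
    | inl i =>
      rw [Fintype.sum_sum_type]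
      have hcol1 : ∀ j, (Matrix.fromBlocks (0 : Matrix (Fin k) (Fin k) F) T₁ (1 : Matrix (Fin k) (Fin k) F) (0 : Matrix (Fin k) (Fin k) F))
          (Sum.inl j) (Sum.inl i) = 0 := fun j => rfl
      have hcol2 : ∀ j, (Matrix.fromBlocks (0 : Matrix (Fin k) (Fin k) F) T₁ (1 : Matrix (Fin k) (Fin k) F) (0 : Matrix (Fin k) (Fin k) F))
          (Sum.inr j) (Sum.inl i) = if j = i then 1 else 0 := fun j => Matrix.one_apply
      simp only [hcol1, hcol2, zero_smul, Finset.sum_const_zero, zero_add, ite_smul, one_smul,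
        Finset.sum_ite_eq, Finset.sum_ite_eq', Finset.mem_univ, if_true]
      rw [hb0l, hb0r]
      have : f ↑(bS i) = ↑(g (bS i)) := rfl
      rw [this, hbTdef, Basis.map_apply]
      rfl
    | inr i =>
      rw [Fintype.sum_sum_type]
      have hcol1 : ∀ j, (Matrix.fromBlocks (0 : Matrix (Fin k) (Fin k) F) T₁ (1 : Matrix (Fin k) (Fin k) F) (0 : Matrix (Fin k) (Fin k) F))
          (Sum.inl j) (Sum.inr i) = T₁ j i := fun j => rfl
      have hcol2 : ∀ j, (Matrix.fromBlocks (0 : Matrix (Fin k) (Fin k) F) T₁ (1 : Matrix (Fin k) (Fin k) F) (0 : Matrix (Fin k) (Fin k) F))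
          (Sum.inr j) (Sum.inr i) = 0 := fun j => rfl
      simp only [hcol1, hcol2, zero_smul, Finset.sum_const_zero, add_zero]
      rw [hb0r]
      have hfq : f ↑(bT i) = ↑(q (bT i)) := rfl
      have hq2 : q (bT i) = Matrix.toLin bT bS T₁ (bT i) := by
        rw [hT1def, Matrix.toLin_toMatrix]
      rw [hfq, hq2, Matrix.toLin_self]
      simp only [hb0l]
      norm_cast
  have hM : LinearMap.toMatrix b0 b0 f = Matrix.fromBlocks 0 T₁ 1 0 := by
    rw [← hkey, LinearMap.toMatrix_toLin]
  -- reindex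
  set en : (Fin k ⊕ Fin k) ≃ Fin n := finSumFinEquiv.trans (finCongr hk2) with hendef
  set b : Basis (Fin n) F (Fin n → F) := b0.reindex en with hbdef
  have hMb : LinearMap.toMatrix b b f =
      Matrix.reindex en en (Matrix.fromBlocks 0 T₁ 1 0) := by
    rw [hbdef, toMatrix_basis_reindex, hM]
  -- change of basis
  set std : Basis (Fin n) F (Fin n → F) := Pi.basisFun F (Fin n) with hstddef
  set P : (Matrix (Fin n) (Fin n) F)ˣ :=
    ⟨std.toMatrix b, b.toMatrix std,
      Basis.toMatrix_mul_toMatrix_flip std b, Basis.toMatrix_mul_toMatrix_flip b std⟩ with hPdef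
  refine ⟨k, hnk, hrS, hrT, rfl, hkt, hk2, T₁, P, hT1unit, ?_⟩
  have hPinv : ((P⁻¹ : (Matrix (Fin n) (Fin n) F)ˣ) : Matrix (Fin n) (Fin n) F)
      = b.toMatrix std := rfl
  have hPval : (P : Matrix (Fin n) (Fin n) F) = std.toMatrix b := rfl
  have hAstd : A = LinearMap.toMatrix std std f := by
    rw [hstddef, LinearMap.toMatrix_eq_toMatrix', hfdef, ← Matrix.toLin'_apply',
      LinearMap.toMatrix'_toLin']
  rw [hPinv, hPval, hAstd, basis_toMatrix_mul_linearMap_toMatrix_mul_basis_toMatrix, hMb]
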